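/- Let h: {0,1}^n → {0,1} be a monotone conjunction on k variables, 1 ≤ k ≤ n, and let r ≥ 1 be an integer. Then the probability over uniform x ∈ {0,1}^n that there exists x' with Hamming distance HD(x,x') ≤ r and h(x') ≠ h(x) equals 2^(-k) · Σ_{i=0}^{r} C(k,i). -/

import Mathlib

open Finset

open Finset

def subtypeProdFstEquiv {A B : Type*} (Q : A → Prop) : {z : A × B // Q z.1} ≃ {a : A // Q a} × B where
  toFun z := (⟨z.1.1, z.2⟩, z.1.2)
  invFun p := ⟨(p.1.1, p.2), p.1.2⟩
  left_inv z := rfl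
  right_inv p := rfl

lemma count_funs (α : Type*) [Fintype α] [DecidableEq α] (r : ℕ) :
    (univ.filter (fun y : α → Bool => (univ.filter fun i => y i = false).card ≤ r)).card
      = ∑ i ∈ Finset.range (r+1), (Fintype.card α).choose i := by
  have hbij : (univ.filter (fun y : α → Bool => (univ.filter fun i => y i = false).card ≤ r)).card
      = ((univ : Finset α).powerset.filter fun T => T.card ≤ r).card := by
    apply Finset.card_nbij' (i := fun y => univ.filter fun i => y i = false)
      (j := fun T a => decide (a ∉ T))
    · intro y hy
      simp only [Finset.mem_coe, mem_filter, mem_powerset] at *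
      exact ⟨Finset.filter_subset _ _, hy.2⟩
    · intro T hT
      simp only [Finset.mem_coe, mem_filter, mem_powerset, mem_univ, true_and] at *
      have : (univ.filter fun i => (decide (i ∉ T) : Bool) = false) = T := by
        ext a; simp
      rw [this]; exact hT.2
    · intro y hy
      funext a
      simp
    · intro T hT
      ext a
      simp
  rw [hbij]
  have hsplit : ((univ : Finset α).powerset.filter fun T => T.card ≤ r)
      = (Finset.range (r+1)).biUnion (fun i => Finset.powersetCard i univ) := by
    ext T
    simp [Finset.mem_powersetCard_univ, Nat.lt_succ_iff]
  rw [hsplit, Finset.card_biUnion]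
  · simp [Finset.card_powersetCard]
  · intro i _ j _ hij
    rw [Function.onFun, Finset.disjoint_left]
    intro T hTi hTj
    rw [Finset.mem_powersetCard_univ] at hTi hTj
    exact hij (hTi ▸ hTj)

lemma PC_char (n k r : ℕ) (hk1 : 1 ≤ k) (hr : 1 ≤ r)
    (S : Finset (Fin n)) (hS : S.card = k)
    (h : (Fin n → Bool) → Bool)
    (hdef : ∀ x : Fin n → Bool, h x = true ↔ ∀ i ∈ S, x i = true) :
    ∀ x : Fin n → Bool,
      (∃ x', hammingDist x x' ≤ r ∧ h x' ≠ h x) ↔ (S.filter fun i => x i = false).card ≤ r := by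
  intro x
  constructor
  · rintro ⟨x', hd, hne⟩
    by_cases hx : h x = true
    · have : (S.filter fun i => x i = false) = ∅ := by
        rw [Finset.filter_eq_empty_iff]
        intro i hi
        simp [(hdef x).mp hx i hi]
      simp [this]
    · have hx' : h x' = true := by
        cases hhx' : h x' <;> cases hhx : h x <;> simp_all
      have hsub : (S.filter fun i => x i = false) ⊆ univ.filter fun i => x i ≠ x' i := by
        intro i hi
        simp only [mem_filter] at *
        have := (hdef x').mp hx' i hi.1
        refine ⟨mem_univ i, ?_⟩
        rw [hi.2, this]; simp
      calc (S.filter fun i => x i = false).card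
          ≤ (univ.filter fun i => x i ≠ x' i).card := Finset.card_le_card hsub
        _ = hammingDist x x' := rfl
        _ ≤ r := hd
  · intro hcard
    by_cases hx : h x = true
    · obtain ⟨j, hj⟩ := Finset.card_pos.mp (by omega : 0 < S.card)
      refine ⟨Function.update x j false, ?_, ?_⟩
      · have hsub : (univ.filter fun i => x i ≠ Function.update x j false i) ⊆ {j} := by
          intro i hi
          simp only [mem_filter, mem_univ, true_and, ne_eq] at hi
          by_contra hij
          simp only [mem_singleton] at hij
          rw [Function.update_of_ne hij] at hi
          exact hi rfl
        calc hammingDist x (Function.update x j false)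
            = (univ.filter fun i => x i ≠ Function.update x j false i).card := rfl
          _ ≤ ({j} : Finset (Fin n)).card := Finset.card_le_card hsub
          _ = 1 := Finset.card_singleton j
          _ ≤ r := hr
      · have : ¬ h (Function.update x j false) = true := by
          rw [hdef]
          push_neg
          exact ⟨j, hj, by simp⟩
        intro heq
        exact this (heq.trans hx)
    · refine ⟨fun i => if i ∈ S then true else x i, ?_, ?_⟩
      · have hsub : (univ.filter fun i => x i ≠ if i ∈ S then true else x i)
            ⊆ S.filter fun i => x i = false := by
          intro i hi
          simp only [mem_filter, mem_univ, true_and, ne_eq] at *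
          by_cases hiS : i ∈ S
          · simp only [hiS, if_true] at hi
            exact ⟨hiS, by simpa using hi⟩
          · simp [hiS] at hi
        calc hammingDist x _ = _ := rfl
          _ ≤ (S.filter fun i => x i = false).card := Finset.card_le_card hsub
          _ ≤ r := hcard
      · have : h (fun i => if i ∈ S then true else x i) = true :=
          (hdef _).mpr (fun i hi => by simp [hi])
        intro heq
        exact hx (heq ▸ this)

/-- Prediction-change adversarial risk of a monotone conjunction on `k` variables
under `r`-perturbations, for uniform instances over `{0,1}^n`. -/
theorem monotone_conjunction_PC_risk (n k r : ℕ) (hk1 : 1 ≤ k) (hkn : k ≤ n) (hr : 1 ≤ r)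
    (S : Finset (Fin n)) (hS : S.card = k)
    (h : (Fin n → Bool) → Bool)
    (hdef : ∀ x : Fin n → Bool, h x = true ↔ ∀ i ∈ S, x i = true) :
    (Nat.card {x : Fin n → Bool //
        ∃ x' : Fin n → Bool, hammingDist x x' ≤ r ∧ h x' ≠ h x} : ℝ) / 2 ^ n
      = ((2 : ℝ) ^ k)⁻¹ * ∑ i ∈ Finset.range (r + 1), (k.choose i : ℝ) := by
  classical
  have hchar := PC_char n k r hk1 hr S hS h hdef
  have hcard : Nat.card {x : Fin n → Bool //
        ∃ x' : Fin n → Bool, hammingDist x x' ≤ r ∧ h x' ≠ h x}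
      = 2 ^ (n - k) * ∑ i ∈ Finset.range (r+1), k.choose i := by
    rw [Nat.card_eq_fintype_card]
    rw [Fintype.card_congr (Equiv.subtypeEquivRight hchar)]
    have key : ∀ x : Fin n → Bool,
        (S.filter fun i => x i = false).card
          = (univ.filter fun i : {i // i ∈ S} => x i.1 = false).card := by
      intro x
      rw [Finset.univ_eq_attach, Finset.filter_attach (fun j => x j = false) S,
        Finset.card_map, Finset.card_attach]
    let e := Equiv.piEquivPiSubtypeProd (fun i : Fin n => i ∈ S) (fun _ => Bool)
    have step : Fintype.card {x : Fin n → Bool // (S.filter fun i => x i = false).card ≤ r}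
        = Fintype.card {z : ({i // i ∈ S} → Bool) × ({i // ¬ i ∈ S} → Bool) //
            (univ.filter fun i : {i // i ∈ S} => z.1 i = false).card ≤ r} := by
      apply Fintype.card_congr
      refine Equiv.subtypeEquiv e ?_
      intro x
      rw [key x]
      rfl
    rw [step, Fintype.card_congr (subtypeProdFstEquiv
      (B := {i : Fin n // ¬ i ∈ S} → Bool)
      (fun a : {i // i ∈ S} → Bool => (univ.filter fun i => a i = false).card ≤ r)),
      Fintype.card_prod]
    have c1 : Fintype.card {a : {i // i ∈ S} → Bool //
        (univ.filter fun i : {i // i ∈ S} => a i = false).card ≤ r}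
        = ∑ i ∈ Finset.range (r+1), k.choose i := by
      rw [Fintype.card_subtype]
      rw [count_funs {i // i ∈ S} r]
      simp [Fintype.card_coe, hS]
    have c2 : Fintype.card ({i : Fin n // ¬ i ∈ S} → Bool) = 2 ^ (n - k) := by
      rw [Fintype.card_fun, Fintype.card_subtype_compl]
      simp [Fintype.card_coe, hS]
    rw [c1, c2, mul_comm]

  rw [hcard]
  have h2 : (2:ℝ)^n = 2^(n-k) * 2^k := by
    rw [← pow_add]; congr 1; omega
  rw [h2]
  push_cast
  rw [mul_div_mul_left _ _ (by positivity : (2:ℝ)^(n-k) ≠ 0), inv_mul_eq_div]
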